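/- For terminating impartial games G, H, if Γ₀(G) ≠ Γ₀(H), say Γ₀(G_{i₀}) < Γ₀(H_{i₀}) where these are components at a maximal index i₀ of a shape S with all other components equal, then Γ₀(S ⋈ G) ≠ Γ₀(S ⋈ H). (Converse of the special substitution theorem.) -/

import Mathlib

universe u

/-- Nimbers (removed from Mathlib; restored with their old meaning): a type synonym of `Ordinal`. -/
def Nimber : Type (u + 1) := Ordinal.{u}

namespace Nimber

noncomputable instance instCCLOBNimber : ConditionallyCompleteLinearOrderBot Nimber.{u} :=
  inferInstanceAs (ConditionallyCompleteLinearOrderBot Ordinal.{u})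

end Nimber

namespace SetTheory

/-- Pre-games (removed from Mathlib; restored with their old meaning). -/
inductive PGame : Type (u + 1)
  | mk : ∀ α β : Type u, (α → PGame) → (β → PGame) → PGame

namespace PGame

def LeftMoves : PGame.{u} → Type u
  | mk l _ _ _ => l

def RightMoves : PGame.{u} → Type u
  | mk _ r _ _ => r

def moveLeft : ∀ g : PGame.{u}, LeftMoves g → PGame.{u}
  | mk _ _ L _ => L

def moveRight : ∀ g : PGame.{u}, RightMoves g → PGame.{u}
  | mk _ _ _ R => R

instance instZeroPGame : Zero PGame.{u} :=
  ⟨⟨PEmpty, PEmpty, PEmpty.elim, PEmpty.elim⟩⟩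

noncomputable def neg (x : PGame.{u}) : PGame.{u} :=
  PGame.rec (motive := fun _ => PGame.{u}) (fun l r _ _ ihL ihR => mk r l ihR ihL) x

noncomputable instance instNegPGame : Neg PGame.{u} :=
  ⟨neg⟩

/-- `lePair x y = (x ≤ y, y ≤ x)`, where `x ≤ y` iff no `x.moveLeft i` has `y ≤ x.moveLeft i`
and no `y.moveRight j` has `y.moveRight j ≤ x` (Mathlib's old order on pre-games). -/
noncomputable def lePair (x : PGame.{u}) : PGame.{u} → Prop × Prop :=
  PGame.rec (motive := fun _ => PGame.{u} → Prop × Prop)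
    (fun _ _ _ _ IHL IHR y =>
      PGame.rec (motive := fun _ => Prop × Prop)
        (fun _ _ yL yR ihL ihR =>
          ((∀ i, ¬ (IHL i (mk _ _ yL yR)).2) ∧ ∀ j, ¬ (ihR j).2,
            (∀ i, ¬ (ihL i).1) ∧ ∀ j, ¬ (IHR j (mk _ _ yL yR)).1)) y) x

/-- `G` is equivalent to `-G`, and so are all its options, hereditarily. -/
def ImpartialAux (G : PGame.{u}) : Prop :=
  PGame.rec (motive := fun _ => Prop)
    (fun l r L R ihL ihR =>
      ((lePair (mk l r L R) (-(mk l r L R))).1 ∧ (lePair (mk l r L R) (-(mk l r L R))).2) ∧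
        (∀ i, ihL i) ∧ ∀ j, ihR j) G

class Impartial (G : PGame.{u}) : Prop where
  out : ImpartialAux G

/-- The Grundy value: the least nimber not among the Grundy values of the left options. -/
noncomputable def grundyValue (G : PGame.{u}) : Nimber.{u} :=
  PGame.rec (motive := fun _ => Nimber.{u}) (fun _ _ _ _ ihL _ => sInf (Set.range ihL)ᶜ) G

end PGame

end SetTheory

open SetTheory PGame Nimber

noncomputable section
open Classical in
/-- The state resulting from a (Left) move in component `i₀` of an ordered join:
all components strictly above `i₀` are replaced by the empty game `0`. -/
def ojNextL {S : Type} [PartialOrder S] (x : S → PGame) (i₀ : S) (j : (x i₀).LeftMoves) :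
    S → PGame :=
  fun i => if i = i₀ then (x i₀).moveLeft j else if i₀ < i then 0 else x i

open Classical in
def ojNextR {S : Type} [PartialOrder S] (x : S → PGame) (i₀ : S) (j : (x i₀).RightMoves) :
    S → PGame :=
  fun i => if i = i₀ then (x i₀).moveRight j else if i₀ < i then 0 else x i

/-- The move relation of the ordered join: `OJRel y x` iff `y` results from `x` by a single move. -/
def OJRel {S : Type} [PartialOrder S] (y x : S → PGame) : Prop :=
  (∃ i₀ j, y = ojNextL x i₀ j) ∨ (∃ i₀ j, y = ojNextR x i₀ j)

theorem ojrel_L {S : Type} [PartialOrder S] (x : S → PGame) (i₀ : S) (j : (x i₀).LeftMoves) :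
    OJRel (ojNextL x i₀ j) x := Or.inl ⟨i₀, j, rfl⟩

theorem ojrel_R {S : Type} [PartialOrder S] (x : S → PGame) (i₀ : S) (j : (x i₀).RightMoves) :
    OJRel (ojNextR x i₀ j) x := Or.inr ⟨i₀, j, rfl⟩

/-- The ordered join of a family of games, as a game, given a termination certificate. -/
def ojoinAcc {S : Type} [PartialOrder S] : ∀ x : S → PGame, Acc OJRel x → PGame := fun x h =>
  Acc.rec (motive := fun x _ => PGame)
    (fun x _ ih =>
      PGame.mk (Σ i₀ : S, (x i₀).LeftMoves) (Σ i₀ : S, (x i₀).RightMoves)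
        (fun p => ih _ (ojrel_L x p.1 p.2))
        (fun p => ih _ (ojrel_R x p.1 p.2))) h

open Classical in
/-- The ordered join `S ⋈ G` of a family of games `G` over the poset `S`.
(Defined as `0` in the degenerate non-terminating case.) -/
def ojoin {S : Type} [PartialOrder S] (x : S → PGame) : PGame :=
  if h : Acc OJRel x then ojoinAcc x h else 0

/-- The Grundy set `Γ₁(G)`: the set of Grundy numbers of the options of `G`. -/
def grundySet (G : PGame) : Set Nimber :=
  Set.range fun i => grundyValue (G.moveLeft i)
end

-- ===== auxiliary =====
noncomputable section
namespace OJAux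

variable {S : Type} [PartialOrder S]

instance instWFLTNimberAux : WellFoundedLT Nimber.{u} := inferInstanceAs (WellFoundedLT Ordinal.{u})

theorem grundyValue_def (G : PGame) :
    grundyValue G = sInf (Set.range fun i => grundyValue (G.moveLeft i))ᶜ := by
  cases G; rfl

theorem compl_range_nonempty {ι : Type u} (f : ι → Nimber.{u}) : (Set.range f)ᶜ.Nonempty := by
  obtain ⟨b, hb⟩ := Ordinal.bddAbove_range.{u, u} (fun i => (f i : Ordinal.{u}))
  refine ⟨(Order.succ b : Ordinal.{u}), ?_⟩
  rintro ⟨i, hi⟩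
  have h1 : (f i : Ordinal.{u}) ≤ b := hb ⟨i, rfl⟩
  change (f i : Ordinal.{u}) = Order.succ b at hi
  rw [hi] at h1
  exact absurd h1 (not_le.mpr (Order.lt_succ b))

theorem grundyValue_ne_moveLeft {G : PGame} (i : G.LeftMoves) :
    grundyValue (G.moveLeft i) ≠ grundyValue G := by
  intro h
  have hm := csInf_mem (compl_range_nonempty fun i => grundyValue (G.moveLeft i))
  rw [← grundyValue_def] at hm
  exact hm ⟨i, h⟩

theorem grundyValue_le_of_forall_moveLeft {G : PGame} {o : Nimber}
    (H : ∀ i, grundyValue (G.moveLeft i) ≠ o) : grundyValue G ≤ o := by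
  rw [grundyValue_def]
  apply csInf_le'
  rintro ⟨i, hi⟩
  exact H i hi

theorem exists_grundyValue_moveLeft_of_lt {G : PGame} {c : Nimber}
    (h : c < grundyValue G) : ∃ i, grundyValue (G.moveLeft i) = c := by
  by_contra hc
  have : grundyValue G ≤ c := grundyValue_le_of_forall_moveLeft fun i hi => hc ⟨i, hi⟩
  exact absurd this (not_le.mpr h)

theorem le_grundyValue_of_Iio_subset_moveLeft {G : PGame} {o : Nimber}
    (H : Set.Iio o ⊆ Set.range fun i => grundyValue (G.moveLeft i)) : o ≤ grundyValue G := by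
  by_contra h
  obtain ⟨i, hi⟩ := H (not_le.mp h)
  exact grundyValue_ne_moveLeft i hi

inductive IsOption : PGame → PGame → Prop
  | moveLeft {x : PGame} (i : x.LeftMoves) : IsOption (x.moveLeft i) x

theorem wf_isOption : WellFounded IsOption := by
  constructor
  intro x
  induction x with
  | mk l r L R ihL ihR =>
    constructor
    intro y hy
    cases hy with
    | moveLeft i => exact ihL i

theorem ojoinAcc_eq : ∀ (x : S → PGame) (h : Acc OJRel x),
    ojoinAcc x h = PGame.mk (Σ i : S, (x i).LeftMoves) (Σ i : S, (x i).RightMoves)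
      (fun p => ojoinAcc _ (h.inv (ojrel_L x p.1 p.2)))
      (fun p => ojoinAcc _ (h.inv (ojrel_R x p.1 p.2))) := by
  intro x h
  induction h with
  | intro x hx _ => rfl

theorem ojoin_eq {x : S → PGame} (h : Acc OJRel x) :
    ojoin x = PGame.mk (Σ i : S, (x i).LeftMoves) (Σ i : S, (x i).RightMoves)
      (fun p => ojoin (ojNextL x p.1 p.2)) (fun p => ojoin (ojNextR x p.1 p.2)) := by
  unfold ojoin
  rw [dif_pos h, ojoinAcc_eq]
  congr 1
  · funext p
    rw [dif_pos (h.inv (ojrel_L x p.1 p.2))]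
  · funext p
    rw [dif_pos (h.inv (ojrel_R x p.1 p.2))]

theorem grundy_ojoin_ne {x : S → PGame} (h : Acc OJRel x) (i : S) (j : (x i).LeftMoves) :
    grundyValue (ojoin (ojNextL x i j)) ≠ grundyValue (ojoin x) := by
  conv_rhs => rw [ojoin_eq h]
  exact grundyValue_ne_moveLeft
    (G := PGame.mk (Σ i : S, (x i).LeftMoves) (Σ i : S, (x i).RightMoves)
      (fun p => ojoin (ojNextL x p.1 p.2)) (fun p => ojoin (ojNextR x p.1 p.2))) ⟨i, j⟩

theorem grundy_ojoin_le {x : S → PGame} (h : Acc OJRel x) {o : Nimber}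
    (H : ∀ (i : S) (j : (x i).LeftMoves), grundyValue (ojoin (ojNextL x i j)) ≠ o) :
    grundyValue (ojoin x) ≤ o := by
  rw [ojoin_eq h]
  exact grundyValue_le_of_forall_moveLeft fun p => H p.1 p.2

theorem le_grundy_ojoin {x : S → PGame} (h : Acc OJRel x) {o : Nimber}
    (H : ∀ c < o, ∃ (i : S) (j : (x i).LeftMoves), grundyValue (ojoin (ojNextL x i j)) = c) :
    o ≤ grundyValue (ojoin x) := by
  rw [ojoin_eq h]
  apply le_grundyValue_of_Iio_subset_moveLeft
  intro c hc
  obtain ⟨i, j, hj⟩ := H c hc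
  exact ⟨⟨i, j⟩, hj⟩

theorem exists_grundy_ojoin {x : S → PGame} (h : Acc OJRel x) {c : Nimber}
    (hc : c < grundyValue (ojoin x)) :
    ∃ (i : S) (j : (x i).LeftMoves), grundyValue (ojoin (ojNextL x i j)) = c := by
  rw [ojoin_eq h] at hc
  obtain ⟨⟨i, j⟩, hj⟩ := exists_grundyValue_moveLeft_of_lt hc
  exact ⟨i, j, hj⟩

theorem exists_moveLeft_cast {G H : PGame} (h : G = H) (k : G.LeftMoves) :
    ∃ k' : H.LeftMoves, H.moveLeft k' = G.moveLeft k := by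
  subst h; exact ⟨k, rfl⟩

open Classical in
def upd (x : S → PGame) (i₀ : S) (B : PGame) : S → PGame :=
  fun i => if i = i₀ then B else x i

@[simp] theorem upd_same (x : S → PGame) (i₀ : S) (B : PGame) : upd x i₀ B i₀ = B :=
  if_pos rfl

theorem upd_ne (x : S → PGame) {i i₀ : S} (h : i ≠ i₀) (B : PGame) : upd x i₀ B i = x i :=
  if_neg h

@[simp] theorem upd_upd (x : S → PGame) (i₀ : S) (B C : PGame) :
    upd (upd x i₀ B) i₀ C = upd x i₀ C := by
  funext m
  by_cases hm : m = i₀ <;> simp [upd, hm]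

@[simp] theorem upd_self (x : S → PGame) (i₀ : S) : upd x i₀ (x i₀) = x := by
  funext m
  by_cases hm : m = i₀ <;> simp [upd, hm]

variable {i₀ : S} (hmax : ∀ i : S, ¬ i₀ < i)
include hmax

theorem ojNextL_max (x : S → PGame) (j : (x i₀).LeftMoves) :
    ojNextL x i₀ j = upd x i₀ ((x i₀).moveLeft j) := by
  funext m
  by_cases hm : m = i₀ <;> simp [ojNextL, upd, hm, hmax m]

omit hmax

theorem ojNextL_upd_of_lt {x : S → PGame} {B : PGame} {i : S} (hlt : i < i₀)
    {k : ((upd x i₀ B) i).LeftMoves} {k' : (x i).LeftMoves}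
    (hk : (x i).moveLeft k' = ((upd x i₀ B) i).moveLeft k) :
    ojNextL (upd x i₀ B) i k = ojNextL x i k' := by
  funext m
  by_cases hm : m = i
  · subst hm
    simp [ojNextL, upd, hk]
  · by_cases hm2 : i < m
    · simp [ojNextL, hm, hm2]
    · have hmi₀ : m ≠ i₀ := by rintro rfl; exact hm2 hlt
      simp [ojNextL, hm, hm2, upd, hmi₀]

theorem ojNextL_upd_of_not_lt {x : S → PGame} {B : PGame} {i : S} (hi : i ≠ i₀)
    (hlt : ¬ i < i₀) {k : ((upd x i₀ B) i).LeftMoves} {k' : (x i).LeftMoves}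
    (hk : (x i).moveLeft k' = ((upd x i₀ B) i).moveLeft k) :
    ojNextL (upd x i₀ B) i k = upd (ojNextL x i k') i₀ B := by
  funext m
  by_cases hm : m = i₀
  · subst hm
    simp [ojNextL, upd, Ne.symm hi, hlt]
  · by_cases hmi : m = i
    · subst hmi
      simp [ojNextL, upd, hm, hk]
    · by_cases hm2 : i < m <;> simp [ojNextL, upd, hm, hmi, hm2]

theorem ojNextL_apply_ne {x : S → PGame} {i : S} (hi : i ≠ i₀) (hlt : ¬ i < i₀)
    (k : (x i).LeftMoves) : (ojNextL x i k) i₀ = x i₀ := by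
  simp [ojNextL, Ne.symm hi, hlt]


open Relation in
theorem main (hmax : ∀ i : S, ¬ i₀ < i) :
    ∀ X : S → PGame, Acc (TransGen OJRel) X → ∀ B : PGame,
      Acc OJRel X → Acc OJRel (upd X i₀ B) → grundyValue B = grundyValue (X i₀) →
      grundyValue (ojoin (upd X i₀ B)) = grundyValue (ojoin X) := by
  intro X hX
  induction hX with
  | intro X _ ihX =>
    intro B
    have hB : Acc (TransGen IsOption) B := (wf_isOption.transGen).apply B
    induction hB with
    | intro B _ ihB =>
      intro hXacc hYacc hγ
      by_cases hcase : ∃ j : (X i₀).LeftMoves, grundyValue (X i₀) < grundyValue ((X i₀).moveLeft j)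
      · -- direct case: some option of `X i₀` has larger Grundy value
        obtain ⟨j, hj⟩ := hcase
        obtain ⟨j', hj'⟩ := exists_grundyValue_moveLeft_of_lt hj
        have h1 : OJRel (upd X i₀ ((X i₀).moveLeft j)) X := by
          rw [← ojNextL_max hmax]; exact ojrel_L X i₀ j
        have h2 : OJRel (upd X i₀ (((X i₀).moveLeft j).moveLeft j'))
            (upd X i₀ ((X i₀).moveLeft j)) := by
          obtain ⟨k, hk⟩ := exists_moveLeft_cast (upd_same X i₀ ((X i₀).moveLeft j)).symm j'
          have h := ojrel_L (upd X i₀ ((X i₀).moveLeft j)) i₀ k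
          rwa [ojNextL_max hmax, hk, upd_upd] at h
        have hTG := Relation.TransGen.tail (Relation.TransGen.single h2) h1
        have hacc2 := (hXacc.inv h1).inv h2
        have e1 := ihX _ hTG (X i₀) hacc2 (by rw [upd_upd, upd_self]; exact hXacc)
          (by rw [upd_same]; exact hj'.symm)
        have e2 := ihX _ hTG B hacc2 (by rw [upd_upd]; exact hYacc)
          (by rw [upd_same]; exact hγ.trans hj'.symm)
        rw [upd_upd, upd_self] at e1
        rw [upd_upd] at e2
        rw [e2]
        exact e1.symm
      · push_neg at hcase
        apply le_antisymm
        · -- every option of `ojoin (upd X i₀ B)` has Grundy value ≠ that of `ojoin X`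
          apply grundy_ojoin_le hYacc
          intro i k
          by_cases hi : i = i₀
          · subst hi
            obtain ⟨k', hk'⟩ := exists_moveLeft_cast (upd_same X i B) k
            have hY1 : ojNextL (upd X i B) i k = upd X i (B.moveLeft k') := by
              rw [ojNextL_max hmax, ← hk', upd_upd]
            rw [hY1]
            have haccY1 : Acc OJRel (upd X i (B.moveLeft k')) := by
              rw [← hY1]; exact hYacc.inv (ojrel_L _ i k)
            have hne : grundyValue (B.moveLeft k') ≠ grundyValue (X i) := by
              rw [← hγ]; exact grundyValue_ne_moveLeft k'
            rcases hne.lt_or_gt with hlt | hgt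
            · -- mirror the move in the `X` side
              obtain ⟨kX, hkX⟩ := exists_grundyValue_moveLeft_of_lt hlt
              have h1 : OJRel (ojNextL X i kX) X := ojrel_L X i kX
              have e := ihX _ (Relation.TransGen.single h1) (B.moveLeft k') (hXacc.inv h1)
                (by rw [ojNextL_max hmax, upd_upd]; exact haccY1)
                (by rw [ojNextL_max hmax, upd_same]; exact hkX.symm)
              rw [ojNextL_max hmax, upd_upd] at e
              rw [e, ← ojNextL_max hmax]
              exact grundy_ojoin_ne hXacc i kX
            · -- revert the move within the same component
              obtain ⟨k₂, hk₂⟩ := exists_grundyValue_moveLeft_of_lt hgt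
              have hTGB : Relation.TransGen IsOption ((B.moveLeft k').moveLeft k₂) B :=
                Relation.TransGen.tail (Relation.TransGen.single (IsOption.moveLeft k₂))
                  (IsOption.moveLeft k')
              obtain ⟨k₃, hk₃⟩ :=
                exists_moveLeft_cast (upd_same X i (B.moveLeft k')).symm k₂
              have hY2 : ojNextL (upd X i (B.moveLeft k')) i k₃
                  = upd X i ((B.moveLeft k').moveLeft k₂) := by
                rw [ojNextL_max hmax, hk₃, upd_upd]
              have haccY2 : Acc OJRel (upd X i ((B.moveLeft k').moveLeft k₂)) := by
                rw [← hY2]; exact haccY1.inv (ojrel_L _ i k₃)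
              have e := ihB _ hTGB hXacc haccY2 hk₂
              intro hcontra
              have hne2 := grundy_ojoin_ne haccY1 i k₃
              rw [hY2, e, hcontra] at hne2
              exact hne2 rfl
          · have hYi : (upd X i₀ B) i = X i := upd_ne X hi B
            obtain ⟨k', hk'⟩ := exists_moveLeft_cast hYi k
            by_cases hlt : i < i₀
            · rw [ojNextL_upd_of_lt hlt hk']
              exact grundy_ojoin_ne hXacc i k'
            · rw [ojNextL_upd_of_not_lt hi hlt hk']
              have h1 : OJRel (ojNextL X i k') X := ojrel_L X i k'
              have e := ihX _ (Relation.TransGen.single h1) B (hXacc.inv h1)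
                (by rw [← ojNextL_upd_of_not_lt hi hlt hk']; exact hYacc.inv (ojrel_L _ i k))
                (by rw [ojNextL_apply_ne hi hlt]; exact hγ)
              rw [e]
              exact grundy_ojoin_ne hXacc i k'
        · -- every value below that of `ojoin X` is attained among options of `ojoin (upd X i₀ B)`
          apply le_grundy_ojoin hYacc
          intro c hc
          obtain ⟨i, k, hk⟩ := exists_grundy_ojoin hXacc hc
          by_cases hi : i = i₀
          · subst hi
            have hlt : grundyValue ((X i).moveLeft k) < grundyValue B := by
              rw [hγ]
              exact lt_of_le_of_ne (hcase k) (grundyValue_ne_moveLeft k)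
            obtain ⟨kB, hkB⟩ := exists_grundyValue_moveLeft_of_lt hlt
            obtain ⟨k'', hk''⟩ := exists_moveLeft_cast (upd_same X i B).symm kB
            refine ⟨i, k'', ?_⟩
            have hY1 : ojNextL (upd X i B) i k'' = upd X i (B.moveLeft kB) := by
              rw [ojNextL_max hmax, hk'', upd_upd]
            rw [hY1]
            have h1 : OJRel (ojNextL X i k) X := ojrel_L X i k
            have e := ihX _ (Relation.TransGen.single h1) (B.moveLeft kB) (hXacc.inv h1)
              (by rw [ojNextL_max hmax, upd_upd, ← hY1]; exact hYacc.inv (ojrel_L _ i k''))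
              (by rw [ojNextL_max hmax, upd_same]; exact hkB)
            rw [ojNextL_max hmax, upd_upd] at e
            rw [e, ← ojNextL_max hmax]
            exact hk
          · have hYi : X i = (upd X i₀ B) i := (upd_ne X hi B).symm
            obtain ⟨k', hk'⟩ := exists_moveLeft_cast hYi k
            refine ⟨i, k', ?_⟩
            by_cases hlt : i < i₀
            · rw [ojNextL_upd_of_lt hlt hk'.symm]
              exact hk
            · rw [ojNextL_upd_of_not_lt hi hlt hk'.symm]
              have h1 : OJRel (ojNextL X i k) X := ojrel_L X i k
              have e := ihX _ (Relation.TransGen.single h1) B (hXacc.inv h1)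
                (by rw [← ojNextL_upd_of_not_lt hi hlt hk'.symm];
                    exact hYacc.inv (ojrel_L _ i k'))
                (by rw [ojNextL_apply_ne hi hlt]; exact hγ)
              rw [e]
              exact hk

theorem aux_converse {S : Type} [PartialOrder S] (G H : S → PGame)
    (hG : Acc OJRel G) (hH : Acc OJRel H)
    (i₀ : S) (hmax : ∀ i : S, ¬ i₀ < i)
    (heq : ∀ i, i ≠ i₀ → G i = H i)
    (hlt : grundyValue (G i₀) < grundyValue (H i₀)) :
    grundyValue (ojoin G) ≠ grundyValue (ojoin H) := by
  obtain ⟨j, hj⟩ := exists_grundyValue_moveLeft_of_lt hlt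
  have hH1 : ojNextL H i₀ j = upd G i₀ ((H i₀).moveLeft j) := by
    rw [ojNextL_max hmax]
    funext m
    by_cases hm : m = i₀
    · simp [upd, hm]
    · simp [upd, hm, (heq m hm).symm]
  have hmain := main hmax G hG.transGen ((H i₀).moveLeft j) hG
    (by rw [← hH1]; exact hH.inv (ojrel_L H i₀ j)) hj
  have hne' := grundy_ojoin_ne hH i₀ j
  rw [hH1, hmain] at hne'
  exact hne'

end OJAux
end

/-- converse of the special substitution theorem: with `i₀` maximal in `S`
and all other components equal, if `Γ₀(G i₀) ≠ Γ₀(H i₀)` then `Γ₀(S ⋈ G) ≠ Γ₀(S ⋈ H)`. -/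
theorem ojoin_special_substitution_converse {S : Type} [PartialOrder S] (G H : S → PGame)
    (hGI : ∀ i, (G i).Impartial) (hHI : ∀ i, (H i).Impartial)
    (hG : Acc OJRel G) (hH : Acc OJRel H)
    (i₀ : S) (hmax : ∀ i : S, ¬ i₀ < i)
    (heq : ∀ i, i ≠ i₀ → G i = H i)
    (hne : grundyValue (G i₀) ≠ grundyValue (H i₀)) :
    grundyValue (ojoin G) ≠ grundyValue (ojoin H) := by
  rcases hne.lt_or_gt with h | h
  · exact OJAux.aux_converse G H hG hH i₀ hmax heq h
  · exact (OJAux.aux_converse H G hH hG i₀ hmax (fun i hi => (heq i hi).symm) h).symm
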